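/- Let X be a compact metrizable space with the N-SBP for a closed set N of Borel probability measures. Let A₀ and A₁ be disjoint closed subsets of X, let μ be an atomless Borel probability measure on X, and let ε, C > 0. Then there exist an integer M ≥ C and open sets U₁, ..., U_M ⊆ X such that: A₀ ⊆ U₁; closure(U_j) ⊆ U_{j+1} for j = 1, ..., M−1; U_M = X \ A₁; ∂U_j is N-small for j = 1, ..., M−1; μ(U₁ \ A₀) < ε; and μ(U_{j+1} \ closure(U_j)) < ε for j = 1, ..., M−1. -/

import Mathlib

open MeasureTheory Topology
open scoped ENNReal

def NSmall {X : Type*} [TopologicalSpace X] [MeasurableSpace X]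
    (N : Set (ProbabilityMeasure X)) (A : Set X) : Prop :=
  ∀ μ ∈ N, (μ : Measure X) A = 0

def NSBP {X : Type*} [TopologicalSpace X] [MeasurableSpace X]
    (N : Set (ProbabilityMeasure X)) : Prop :=
  ∃ B : Set (Set X), TopologicalSpace.IsTopologicalBasis B ∧ ∀ U ∈ B, NSmall N (frontier U)

lemma ediv24 (e : ℝ≥0∞) : e / 2 / 2 = e / 4 := by
  rw [div_eq_mul_inv, div_eq_mul_inv, div_eq_mul_inv, mul_assoc,
    ← ENNReal.mul_inv (Or.inl (by norm_num)) (Or.inl (by norm_num))]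
  norm_num

lemma ediv48 (e : ℝ≥0∞) : e / 4 / 2 = e / 8 := by
  rw [div_eq_mul_inv, div_eq_mul_inv, div_eq_mul_inv, mul_assoc,
    ← ENNReal.mul_inv (Or.inl (by norm_num)) (Or.inl (by norm_num))]
  norm_num

section Aux

variable {X : Type*} [TopologicalSpace X] [CompactSpace X]
    [TopologicalSpace.MetrizableSpace X] [MeasurableSpace X] [BorelSpace X]
    {N : Set (ProbabilityMeasure X)}

/-- frontier of a finite union is contained in the union of frontiers -/
lemma frontier_finset_biUnion {ι : Type*} (t : Finset ι) (f : ι → Set X) :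
    frontier (⋃ i ∈ t, f i) ⊆ ⋃ i ∈ t, frontier (f i) := by
  classical
  induction t using Finset.induction with
  | empty => simp
  | insert _ _ hx ih =>
    rename_i a s
    rw [Finset.set_biUnion_insert]
    refine (frontier_union_subset _ _).trans ?_
    rw [Finset.set_biUnion_insert]
    exact Set.union_subset_union Set.inter_subset_left
      (Set.inter_subset_right.trans ih)

/-- Basic interpolation lemma: between a closed set and an open superset one can
interpolate an open set with N-small frontier and small extra measure. -/
lemma nsmall_interpolation (hSBP : NSBP N) (μ : ProbabilityMeasure X)
    {K V : Set X} (hK : IsClosed K) (hV : IsOpen V) (hKV : K ⊆ V)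
    {δ : ℝ≥0∞} (hδ : δ ≠ 0) :
    ∃ U : Set X, IsOpen U ∧ K ⊆ U ∧ closure U ⊆ V ∧ NSmall N (frontier U) ∧
      (μ : Measure X) (U \ K) < δ := by
  classical
  obtain ⟨B, hBbasis, hBsmall⟩ := hSBP
  obtain ⟨W, hKW, hWo, -, hWK⟩ :=
    hK.measurableSet.exists_isOpen_diff_lt (μ := (μ : Measure X)) (measure_ne_top _ _) hδ
  obtain ⟨W', hW'o, hKW', hW'sub⟩ :=
    normal_exists_closure_subset hK (hWo.inter hV) (Set.subset_inter hKW hKV)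
  -- cover K by basis elements with N-small frontier inside W'
  have hcov : ∀ x : K, ∃ b : Set X, b ∈ B ∧ (x : X) ∈ b ∧ b ⊆ W' := fun x =>
    hBbasis.exists_subset_of_mem_open (hKW' x.2) hW'o
  choose f hfB hfx hfW using hcov
  obtain ⟨t, ht⟩ := hK.isCompact.elim_finite_subcover f
    (fun i => hBbasis.isOpen (hfB i)) (fun x hx => Set.mem_iUnion.2 ⟨⟨x, hx⟩, hfx ⟨x, hx⟩⟩)
  refine ⟨⋃ i ∈ t, f i, isOpen_biUnion fun i _ => hBbasis.isOpen (hfB i), ht, ?_, ?_, ?_⟩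
  · refine (closure_mono (Set.iUnion₂_subset fun i _ => hfW i)).trans
      (hW'sub.trans Set.inter_subset_right)
  · intro ν hν
    refine measure_mono_null (frontier_finset_biUnion t f) ?_
    exact (measure_biUnion_null_iff t.countable_toSet).2 fun i _ => hBsmall _ (hfB i) ν hν
  · refine lt_of_le_of_lt (measure_mono ?_) hWK
    exact Set.diff_subset_diff_left
      ((Set.iUnion₂_subset fun i _ => hfW i).trans
        (subset_closure.trans (hW'sub.trans Set.inter_subset_left)))

/-- From a finite family of sets of measure `< δ` whose union has measure at least `a`,
one can pick a subfamily whose union has measure in `[a, a + δ)`. -/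
lemma chunk_lemma {Y : Type*} [MeasurableSpace Y] (μ : Measure Y) {ι : Type*}
    (a δ : ℝ≥0∞) (hδ0 : δ ≠ 0) (hδtop : δ ≠ ⊤) (f : ι → Set Y) :
    ∀ s : Finset ι, (∀ i ∈ s, μ (f i) < δ) → a ≤ μ (⋃ i ∈ s, f i) →
    ∃ u : Finset ι, u ⊆ s ∧ a ≤ μ (⋃ i ∈ u, f i) ∧ μ (⋃ i ∈ u, f i) < a + δ := by
  classical
  intro s
  induction s using Finset.strongInduction with
  | _ s ih =>
    intro hsmall hbig
    by_cases h : μ (⋃ i ∈ s, f i) < a + δ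
    · exact ⟨s, subset_rfl, hbig, h⟩
    · push_neg at h
      have hsne : s.Nonempty := by
        rcases s.eq_empty_or_nonempty with rfl | hne
        · exfalso
          simp only [Finset.notMem_empty, Set.iUnion_of_empty, Set.iUnion_empty,
            measure_empty] at h
          exact hδ0 (le_antisymm ((le_add_self : δ ≤ a + δ).trans h) (zero_le (a := δ)))
        · exact hne
      obtain ⟨i, hi⟩ := hsne
      have hsub : (⋃ j ∈ s, f j) ⊆ (⋃ j ∈ s.erase i, f j) ∪ f i := by
        intro x hx
        simp only [Set.mem_iUnion, exists_prop] at hx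
        obtain ⟨j, hj, hxj⟩ := hx
        by_cases hji : j = i
        · exact Or.inr (hji ▸ hxj)
        · exact Or.inl (Set.mem_biUnion (Finset.mem_erase.2 ⟨hji, hj⟩) hxj)
      have h2 : a + δ ≤ μ (⋃ j ∈ s.erase i, f j) + δ := by
        calc a + δ ≤ μ (⋃ j ∈ s, f j) := h
        _ ≤ μ ((⋃ j ∈ s.erase i, f j) ∪ f i) := measure_mono hsub
        _ ≤ μ (⋃ j ∈ s.erase i, f j) + μ (f i) := measure_union_le _ _
        _ ≤ μ (⋃ j ∈ s.erase i, f j) + δ := by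
            exact add_le_add_right (le_of_lt (hsmall i hi)) _
      have h3 : a ≤ μ (⋃ j ∈ s.erase i, f j) :=
        (ENNReal.add_le_add_iff_right hδtop).1 h2
      obtain ⟨u, hu, h4, h5⟩ := ih (s.erase i) (Finset.erase_ssubset hi)
        (fun j hj => hsmall j (Finset.mem_of_mem_erase hj)) h3
      exact ⟨u, hu.trans (Finset.erase_subset _ _), h4, h5⟩

end Aux

section Key

variable {X : Type*} [TopologicalSpace X] [CompactSpace X]
    [TopologicalSpace.MetrizableSpace X] [MeasurableSpace X] [BorelSpace X]
    {N : Set (ProbabilityMeasure X)}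

/-- The key step: enlarge a closed set `K ⊆ V` to an open set with `N`-small frontier,
adding measure `< e`, while either making definite progress (`e/8`) towards filling `V`,
or certifying that the remainder is already `< e`. -/
lemma keystep (hSBP : NSBP N) (μ : ProbabilityMeasure X)
    [NullSingletonClass (μ : Measure X)]
    {K V : Set X} (hK : IsClosed K) (hV : IsOpen V) (hKV : K ⊆ V)
    {e : ℝ≥0∞} (he0 : e ≠ 0) (heT : e ≠ ⊤) :
    ∃ U : Set X, IsOpen U ∧ K ⊆ U ∧ closure U ⊆ V ∧ NSmall N (frontier U) ∧
      (μ : Measure X) (U \ K) < e ∧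
      ((μ : Measure X) (V \ closure U) + e / 8 ≤ (μ : Measure X) (V \ K) ∨
        (μ : Measure X) (V \ closure U) < e) := by
  classical
  set ν : Measure X := (μ : Measure X)
  have h8a : e / 8 ≠ 0 := by
    simp only [ne_eq, ENNReal.div_eq_zero_iff, he0, false_or]
    exact (by norm_num : (8 : ℝ≥0∞) ≠ ⊤)
  have h8T : e / 8 ≠ ⊤ := (ENNReal.div_lt_top heT (by norm_num)).ne
  by_cases hm : ν (V \ K) < e
  · obtain ⟨U, hUo, hKU, hUV, hUs, hUm⟩ := nsmall_interpolation hSBP μ hK hV hKV he0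
    refine ⟨U, hUo, hKU, hUV, hUs, hUm, Or.inr ?_⟩
    exact lt_of_le_of_lt (measure_mono (Set.diff_subset_diff_right
      (hKU.trans subset_closure))) hm
  · push_neg at hm
    -- the remainder W has measure at least e
    set W : Set X := V \ K with hW
    have hWo : IsOpen W := hV.sdiff hK
    -- a compact subset T of W capturing almost all its measure
    obtain ⟨T, hTW, hTc, hTm⟩ :=
      hWo.measurableSet.exists_isClosed_diff_lt (μ := ν) (measure_ne_top _ _) h8a
    -- cover T by open subsets of W of measure < e/8
    have hcov : ∀ x : T, ∃ O : Set X, IsOpen O ∧ (x : X) ∈ O ∧ O ⊆ W ∧ ν O < e / 8 := by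
      intro x
      have hx0 : ν {(x : X)} < e / 8 := by
        rw [measure_singleton]
        exact pos_iff_ne_zero.2 h8a
      obtain ⟨O, hxO, hOo, hOm⟩ := Set.exists_isOpen_lt_of_lt {(x : X)} _ hx0
      exact ⟨O ∩ W, hOo.inter hWo, ⟨hxO rfl, hTW x.2⟩, Set.inter_subset_right,
        lt_of_le_of_lt (measure_mono Set.inter_subset_left) hOm⟩
    choose f hfo hfx hfW hfm using hcov
    obtain ⟨t, ht⟩ := (hTc.isCompact).elim_finite_subcover f hfo
      (fun x hx => Set.mem_iUnion.2 ⟨⟨x, hx⟩, hfx ⟨x, hx⟩⟩)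
    -- the union of the cover has measure at least e/4
    have hbig : e / 4 ≤ ν (⋃ i ∈ t, f i) := by
      have h1 : ν T + e / 8 ≥ ν W := by
        calc ν W ≤ ν T + ν (W \ T) := by
              refine (measure_mono ?_).trans (measure_union_le _ _)
              intro x hx
              by_cases h : x ∈ T
              · exact Or.inl h
              · exact Or.inr ⟨hx, h⟩
        _ ≤ ν T + e / 8 := add_le_add_right hTm.le _
      have h2 : e ≤ ν T + e / 8 := hm.trans h1
      have h3 : e / 4 + e / 8 ≤ e := by
        have h48 : e / 8 ≤ e / 4 := ENNReal.div_le_div_left (by norm_num) e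
        have h44 : e / 4 + e / 4 = e / 2 := by
          rw [← ediv24 e, ENNReal.add_halves]
        calc e / 4 + e / 8 ≤ e / 4 + e / 4 := add_le_add_right h48 _
        _ = e / 2 := h44
        _ ≤ e := ENNReal.half_le_self
      have h4 : e / 4 + e / 8 ≤ ν (⋃ i ∈ t, f i) + e / 8 := by
        refine le_trans (h3.trans h2) ?_
        exact add_le_add_left (measure_mono ht) _
      exact (ENNReal.add_le_add_iff_right h8T).1 h4
    -- extract a chunk of measure in [e/4, e/4 + e/8)
    obtain ⟨u, hut, hDlb, hDub⟩ := chunk_lemma ν (e / 4) (e / 8) h8a h8T f t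
      (fun i hi => hfm i) hbig
    set D : Set X := ⋃ i ∈ u, f i with hD
    have hDo : IsOpen D := isOpen_biUnion fun i _ => hfo i
    have hDW : D ⊆ W := Set.iUnion₂_subset fun i _ => hfW i
    -- a compact piece of the chunk
    obtain ⟨T', hT'D, hT'c, hT'm⟩ :=
      hDo.measurableSet.exists_isClosed_diff_lt (μ := ν) (measure_ne_top _ _) h8a
    have h88 : e / 8 + e / 8 = e / 4 := by
      rw [← ediv48 e, ENNReal.add_halves]
    have hT'lb : e / 8 ≤ ν T' := by
      have h5 : ν D ≤ ν T' + e / 8 := by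
        calc ν D ≤ ν (T' ∪ (D \ T')) := measure_mono (fun x hx => by
              by_cases h : x ∈ T'
              · exact Or.inl h
              · exact Or.inr ⟨hx, h⟩)
        _ ≤ ν T' + ν (D \ T') := measure_union_le _ _
        _ ≤ ν T' + e / 8 := add_le_add_right hT'm.le _
      have h6 : e / 8 + e / 8 ≤ ν T' + e / 8 := by
        rw [h88]; exact hDlb.trans h5
      exact (ENNReal.add_le_add_iff_right h8T).1 h6
    have hT'ub : ν T' < e / 2 := by
      have h44 : e / 4 + e / 8 ≤ e / 2 := by
        have h48 : e / 8 ≤ e / 4 := ENNReal.div_le_div_left (by norm_num) e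
        calc e / 4 + e / 8 ≤ e / 4 + e / 4 := add_le_add_right h48 _
        _ = e / 2 := by rw [← ediv24 e, ENNReal.add_halves]
      exact lt_of_le_of_lt (measure_mono hT'D) (hDub.trans_le h44)
    -- interpolate around K ∪ T'
    have hK' : IsClosed (K ∪ T') := hK.union hT'c
    have hK'V : K ∪ T' ⊆ V := Set.union_subset hKV ((hT'D.trans hDW).trans Set.diff_subset)
    have h20 : e / 2 ≠ 0 := by
      simp only [ne_eq, ENNReal.div_eq_zero_iff, he0, false_or]
      exact (by norm_num : (2 : ℝ≥0∞) ≠ ⊤)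
    obtain ⟨U, hUo, hKU, hUV, hUs, hUm⟩ := nsmall_interpolation hSBP μ hK' hV hK'V h20
    refine ⟨U, hUo, (Set.subset_union_left).trans hKU, hUV, hUs, ?_, Or.inl ?_⟩
    · have hsplit : U \ K ⊆ (U \ (K ∪ T')) ∪ T' := by
        intro x hx
        by_cases h : x ∈ T'
        · exact Or.inr h
        · exact Or.inl ⟨hx.1, fun hc => hc.elim hx.2 h⟩
      calc ν (U \ K) ≤ ν ((U \ (K ∪ T')) ∪ T') := measure_mono hsplit
      _ ≤ ν (U \ (K ∪ T')) + ν T' := measure_union_le _ _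
      _ < e / 2 + e / 2 := ENNReal.add_lt_add hUm hT'ub
      _ = e := ENNReal.add_halves e
    · have hT'W : T' ⊆ V \ K := hT'D.trans hDW
      have heq : ν (V \ (K ∪ T')) = ν (V \ K) - ν T' := by
        rw [← Set.diff_diff]
        rw [measure_diff hT'W hT'c.nullMeasurableSet (measure_ne_top _ _)]
      calc ν (V \ closure U) + e / 8
          ≤ ν (V \ (K ∪ T')) + e / 8 := by
            refine add_le_add_left (measure_mono (Set.diff_subset_diff_right
              (hKU.trans subset_closure))) _
      _ = (ν (V \ K) - ν T') + e / 8 := by rw [heq]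
      _ ≤ (ν (V \ K) - e / 8) + e / 8 := add_le_add_left (tsub_le_tsub_left hT'lb _) _
      _ = ν (V \ K) := by
            refine tsub_add_cancel_of_le ?_
            have h8e : e / 8 ≤ e := by
              calc e / 8 ≤ e / 1 := ENNReal.div_le_div_left (by norm_num) e
              _ = e := by simp
            exact h8e.trans hm

end Key

theorem sbp_to_function_one_measure {X : Type*} [TopologicalSpace X] [CompactSpace X]
    [TopologicalSpace.MetrizableSpace X] [MeasurableSpace X] [BorelSpace X]
    (N : Set (ProbabilityMeasure X)) (hN : IsClosed N) (hSBP : NSBP N)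
    (A₀ A₁ : Set X) (hA₀ : IsClosed A₀) (hA₁ : IsClosed A₁) (hdisj : Disjoint A₀ A₁)
    (μ : ProbabilityMeasure X) (hatomless : ∀ x : X, (μ : Measure X) {x} = 0)
    (ε C : ℝ) (hε : 0 < ε) (hC : 0 < C) :
    ∃ M : ℕ, C ≤ M ∧ ∃ U : ℕ → Set X,
      (∀ j, 1 ≤ j → j ≤ M → IsOpen (U j)) ∧
      A₀ ⊆ U 1 ∧
      (∀ j, 1 ≤ j → j + 1 ≤ M → closure (U j) ⊆ U (j + 1)) ∧
      U M = A₁ᶜ ∧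
      (∀ j, 1 ≤ j → j + 1 ≤ M → NSmall N (frontier (U j))) ∧
      (μ : Measure X) (U 1 \ A₀) < ENNReal.ofReal ε ∧
      (∀ j, 1 ≤ j → j + 1 ≤ M →
        (μ : Measure X) (U (j + 1) \ closure (U j)) < ENNReal.ofReal ε) := by
  classical
  have hA0V : A₀ ⊆ A₁ᶜ := fun x hx hx1 => Set.disjoint_left.mp hdisj hx hx1
  have hVo : IsOpen A₁ᶜ := hA₁.isOpen_compl
  haveI : NullSingletonClass (μ : Measure X) := ⟨hatomless⟩
  set e : ℝ≥0∞ := ENNReal.ofReal ε with he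
  have he0 : e ≠ 0 := (ENNReal.ofReal_pos.2 hε).ne'
  have heT : e ≠ ⊤ := ENNReal.ofReal_ne_top
  have h8a : e / 8 ≠ 0 := by
    simp only [ne_eq, ENNReal.div_eq_zero_iff, he0, false_or]
    exact (by norm_num : (8 : ℝ≥0∞) ≠ ⊤)
  -- total step function
  have key : ∀ K : Set X, ∃ U : Set X, IsOpen U ∧ closure U ⊆ A₁ᶜ ∧ NSmall N (frontier U) ∧
      (IsClosed K → K ⊆ A₁ᶜ → (K ⊆ U ∧ (μ : Measure X) (U \ K) < e ∧
        ((μ : Measure X) (A₁ᶜ \ closure U) + e / 8 ≤ (μ : Measure X) (A₁ᶜ \ K) ∨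
          (μ : Measure X) (A₁ᶜ \ closure U) < e))) := by
    intro K
    by_cases hKc : IsClosed K ∧ K ⊆ A₁ᶜ
    · obtain ⟨U, h1, h2, h3, h4, h5, h6⟩ := keystep hSBP μ hKc.1 hVo hKc.2 he0 heT
      exact ⟨U, h1, h3, h4, fun _ _ => ⟨h2, h5, h6⟩⟩
    · exact ⟨∅, isOpen_empty, by simp, by simp [NSmall],
        fun h1 h2 => absurd ⟨h1, h2⟩ hKc⟩
  choose F hFo hFcl hFsm hFstep using key
  -- build the chain
  set V : ℕ → Set X := fun n => Nat.rec (F A₀) (fun _ p => F (closure p)) n with hV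
  have hop : ∀ n, IsOpen (V n) := by
    intro n; cases n with
    | zero => exact hFo A₀
    | succ m => exact hFo _
  have hcl : ∀ n, closure (V n) ⊆ A₁ᶜ := by
    intro n; cases n with
    | zero => exact hFcl A₀
    | succ m => exact hFcl _
  have hsm : ∀ n, NSmall N (frontier (V n)) := by
    intro n; cases n with
    | zero => exact hFsm A₀
    | succ m => exact hFsm _
  have hstep : ∀ n, closure (V n) ⊆ V (n + 1) ∧
      (μ : Measure X) (V (n + 1) \ closure (V n)) < e ∧
      ((μ : Measure X) (A₁ᶜ \ closure (V (n + 1))) + e / 8 ≤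
          (μ : Measure X) (A₁ᶜ \ closure (V n)) ∨
        (μ : Measure X) (A₁ᶜ \ closure (V (n + 1))) < e) := fun n =>
    hFstep (closure (V n)) isClosed_closure (hcl n)
  have h0 := hFstep A₀ hA₀ hA0V
  set r : ℕ → ℝ≥0∞ := fun n => (μ : Measure X) (A₁ᶜ \ closure (V n)) with hr
  -- the remainder eventually drops below e
  have hterm : ∃ n₀, r n₀ < e := by
    by_contra hcon
    push_neg at hcon
    have hdec : ∀ n, r (n + 1) + e / 8 ≤ r n := fun n =>
      ((hstep n).2.2).resolve_right (not_lt.2 (hcon (n + 1)))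
    have hbound : ∀ n : ℕ, r n + n * (e / 8) ≤ r 0 := by
      intro n
      induction n with
      | zero => simp
      | succ m ih =>
        calc r (m + 1) + ((m + 1 : ℕ) : ℝ≥0∞) * (e / 8)
            = (r (m + 1) + e / 8) + m * (e / 8) := by push_cast; ring
        _ ≤ r m + m * (e / 8) := add_le_add_left (hdec m) _
        _ ≤ r 0 := ih
    have hb1 : ∀ n : ℕ, (n : ℝ≥0∞) * (e / 8) ≤ 1 := fun n =>
      le_trans (le_trans le_add_self (hbound n)) prob_le_one
    have h8T : e / 8 ≠ ⊤ := (ENNReal.div_lt_top heT (by norm_num)).ne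
    obtain ⟨n, hn⟩ := @ENNReal.exists_nat_gt (1 / (e / 8))
      (ENNReal.div_lt_top ENNReal.one_ne_top h8a).ne
    rw [ENNReal.div_lt_iff (Or.inl h8a) (Or.inl h8T)] at hn
    exact absurd (hb1 n) (not_le.2 hn)
  obtain ⟨n₀, hn₀⟩ := hterm
  have hafter : ∀ k : ℕ, r (n₀ + k) < e := by
    intro k
    induction k with
    | zero => exact hn₀
    | succ m ih =>
      rcases (hstep (n₀ + m)).2.2 with h | h
      · exact lt_of_le_of_lt (le_trans le_self_add h) ih
      · exact h
  set M : ℕ := max (⌈C⌉₊) (n₀ + 2) with hM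
  have hM2 : n₀ + 2 ≤ M := le_max_right _ _
  refine ⟨M, ?_, fun j => if j = M then A₁ᶜ else V (j - 1), ?_, ?_, ?_, ?_, ?_, ?_, ?_⟩
  · calc C ≤ (⌈C⌉₊ : ℝ) := Nat.le_ceil C
    _ ≤ (M : ℝ) := by exact_mod_cast le_max_left _ _
  · intro j h1 h2
    by_cases hj : j = M
    · simpa [hj] using hVo
    · simpa [hj] using hop (j - 1)
  · have h1M : (1 : ℕ) ≠ M := by omega
    simp [h1M]; exact h0.1
  · intro j h1 h2
    have hjM : j ≠ M := by omega
    have hj1 : j - 1 + 1 = j := Nat.succ_pred_eq_of_pos h1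
    by_cases hj : j + 1 = M
    · simpa [hjM, hj] using hcl (j - 1)
    · have : j + 1 - 1 = j - 1 + 1 := by omega
      simpa [hjM, hj, this, hj1] using (hstep (j - 1)).1
  · simp
  · intro j h1 h2
    have hjM : j ≠ M := by omega
    simpa [hjM] using hsm (j - 1)
  · have h1M : (1 : ℕ) ≠ M := by omega
    simp [h1M, ← he]; exact h0.2.1
  · intro j h1 h2
    have hjM : j ≠ M := by omega
    have hj1 : j - 1 + 1 = j := Nat.succ_pred_eq_of_pos h1
    by_cases hj : j + 1 = M
    · have hge : n₀ ≤ j - 1 := by omega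
      obtain ⟨k, hk⟩ := Nat.le.dest hge
      have := hafter k
      rw [hk] at this
      simpa [hjM, hj, ← he] using this
    · have h2' : j + 1 - 1 = j - 1 + 1 := by omega
      have := (hstep (j - 1)).2.1
      rw [hj1] at this
      simpa [hjM, hj, h2', hj1, ← he] using this
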